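/- Suppose (γ,P) satisfies the dissipation LMI M(γ,P) ⪯ 0. Let x : ℕ → ℝⁿ and a : ℕ → ℝᵐ be sequences satisfying x[k+1] = A x[k] + B a[k] for all k, with x[0] = 0 and x[k] → 0 as k → ∞, and let y_p[k] = C_p x[k] + D_p a[k] and y_r[k] = C_r x[k] + D_r a[k]. If the residual energy series ∑_{k=0}^{∞} ‖y_r[k]‖² is summable, then the performance energy series ∑_{k=0}^{∞} ‖y_p[k]‖² is summable and ∑_{k=0}^{∞} ‖y_p[k]‖² ≤ γ · ∑_{k=0}^{∞} ‖y_r[k]‖². -/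
import Mathlib


open Matrix Finset Filter

/-- If `(γ, P)` satisfies the dissipation LMI `M(γ,P) ⪯ 0`, then along any
trajectory starting at `x 0 = 0` with `x k → 0` as `k → ∞`, summability of the residual
energy implies summability of the performance energy, and the total performance energy is
bounded by `γ` times the total residual energy. -/
theorem dissipation_infinite_horizon_energy_bound
    {n m p r : ℕ}
    (A : Matrix (Fin n) (Fin n) ℝ) (B : Matrix (Fin n) (Fin m) ℝ)
    (Cp : Matrix (Fin p) (Fin n) ℝ) (Dp : Matrix (Fin p) (Fin m) ℝ)
    (Cr : Matrix (Fin r) (Fin n) ℝ) (Dr : Matrix (Fin r) (Fin m) ℝ)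
    (γ : ℝ) (hγ : 0 ≤ γ)
    (P : Matrix (Fin n) (Fin n) ℝ) (hP : P.IsSymm)
    (hLMI : ∀ (x : Fin n → ℝ) (a : Fin m → ℝ),
      (A.mulVec x + B.mulVec a) ⬝ᵥ P.mulVec (A.mulVec x + B.mulVec a)
        - x ⬝ᵥ P.mulVec x
        + ∑ i, ((Cp.mulVec x + Dp.mulVec a) i) ^ 2
        - γ * ∑ i, ((Cr.mulVec x + Dr.mulVec a) i) ^ 2 ≤ 0)
    (x : ℕ → Fin n → ℝ) (a : ℕ → Fin m → ℝ)
    (hdyn : ∀ k, x (k + 1) = A.mulVec (x k) + B.mulVec (a k))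
    (hx0 : x 0 = 0)
    (hxlim : Tendsto x atTop (nhds 0))
    (yp : ℕ → Fin p → ℝ) (yr : ℕ → Fin r → ℝ)
    (hyp : ∀ k, yp k = Cp.mulVec (x k) + Dp.mulVec (a k))
    (hyr : ∀ k, yr k = Cr.mulVec (x k) + Dr.mulVec (a k))
    (hsum : Summable fun k => ∑ i, (yr k i) ^ 2) :
    (Summable fun k => ∑ i, (yp k i) ^ 2) ∧
      ∑' k, ∑ i, (yp k i) ^ 2 ≤ γ * ∑' k, ∑ i, (yr k i) ^ 2 := by

  set V : (Fin n → ℝ) → ℝ := fun v => v ⬝ᵥ P.mulVec v with hV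
  have hV0 : V 0 = 0 := by simp [hV]
  have hVcont : Continuous V := by
    have : V = fun v => ∑ i, v i * ∑ j, P i j * v j := by
      funext v; simp [hV, dotProduct, Matrix.mulVec, mul_comm]
    rw [this]
    exact continuous_finset_sum _ fun i _ =>
      (continuous_apply i).mul (continuous_finset_sum _ fun j _ =>
        continuous_const.mul (continuous_apply j))
  have hstep : ∀ k, ∑ i, (yp k i) ^ 2 ≤
      γ * ∑ i, (yr k i) ^ 2 + (V (x k) - V (x (k + 1))) := by
    intro k
    have h := hLMI (x k) (a k)
    rw [← hdyn k, hyp k, hyr k] at *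
    simp only [hV]
    linarith
  have hkey : ∀ N, ∑ k ∈ Finset.range N, ∑ i, (yp k i) ^ 2 ≤
      γ * ∑ k ∈ Finset.range N, ∑ i, (yr k i) ^ 2 - V (x N) := by
    intro N
    have h1 : ∑ k ∈ Finset.range N, ∑ i, (yp k i) ^ 2 ≤
        ∑ k ∈ Finset.range N, (γ * ∑ i, (yr k i) ^ 2 + (V (x k) - V (x (k + 1)))) :=
      Finset.sum_le_sum fun k _ => hstep k
    rw [Finset.sum_add_distrib, Finset.sum_range_sub' (fun k => V (x k)) N,
      ← Finset.mul_sum, hx0, hV0] at h1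
    linarith
  have hVlim : Tendsto (fun N => V (x N)) atTop (nhds 0) := by
    have := (hVcont.tendsto 0).comp hxlim
    rwa [hV0] at this
  have hyrnn : ∀ k, 0 ≤ ∑ i, (yr k i) ^ 2 := fun k =>
    Finset.sum_nonneg fun i _ => sq_nonneg _
  have hypnn : ∀ k, 0 ≤ ∑ i, (yp k i) ^ 2 := fun k =>
    Finset.sum_nonneg fun i _ => sq_nonneg _
  obtain ⟨C, hC⟩ := (hVlim.neg.bddAbove_range)
  have hCb : ∀ N, -V (x N) ≤ C := fun N => hC ⟨N, rfl⟩
  have hsummable : Summable fun k => ∑ i, (yp k i) ^ 2 := by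
    apply summable_of_sum_range_le (c := γ * ∑' k, ∑ i, (yr k i) ^ 2 + C) hypnn
    intro N
    calc ∑ k ∈ Finset.range N, ∑ i, (yp k i) ^ 2
        ≤ γ * ∑ k ∈ Finset.range N, ∑ i, (yr k i) ^ 2 - V (x N) := hkey N
      _ ≤ γ * ∑' k, ∑ i, (yr k i) ^ 2 + C := by
          have := Summable.sum_le_tsum (Finset.range N) (fun k _ => hyrnn k) hsum
          have := hCb N
          nlinarith
  refine ⟨hsummable, ?_⟩
  have h1 : Tendsto (fun N => ∑ k ∈ Finset.range N, ∑ i, (yp k i) ^ 2) atTop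
      (nhds (∑' k, ∑ i, (yp k i) ^ 2)) := hsummable.hasSum.tendsto_sum_nat
  have h2 : Tendsto (fun N => γ * ∑ k ∈ Finset.range N, ∑ i, (yr k i) ^ 2 - V (x N)) atTop
      (nhds (γ * ∑' k, ∑ i, (yr k i) ^ 2 - 0)) :=
    (hsum.hasSum.tendsto_sum_nat.const_mul γ).sub hVlim
  rw [sub_zero] at h2
  exact le_of_tendsto_of_tendsto' h1 h2 hkey
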